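/- Let u ∈ ℂ, α, β ∈ ℝ with β² - |u|² ≥ 0, Ω₁ = √(β² - |u|²), and M = [[-iΩ₁, i·conj(u)],[iu, iΩ₁]]. Define K(λ) = ((λ² - α² - β²)I + 2λM) / ((λ + α + iβ)(λ - α + iβ)). Then K(λ)K(-λ) = I for all λ where the denominators are nonzero. -/

import Mathlib

open Complex Matrix
open ComplexConjugate

/-- The time-dependent reflection matrix of Example 3 satisfies `K(λ) K(-λ) = I`. -/
theorem stmt_11 (u : ℂ) (α β : ℝ) (h : 0 ≤ β ^ 2 - Complex.normSq u)
    (Ω₁ : ℝ) (hΩ₁ : Ω₁ = Real.sqrt (β ^ 2 - Complex.normSq u))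
    (M : Matrix (Fin 2) (Fin 2) ℂ)
    (hM : M = !![-Complex.I * Ω₁, Complex.I * conj u; Complex.I * u, Complex.I * Ω₁])
    (K : ℂ → Matrix (Fin 2) (Fin 2) ℂ)
    (hK : ∀ lam : ℂ, K lam =
      ((lam + α + Complex.I * β) * (lam - α + Complex.I * β))⁻¹ •
        ((lam ^ 2 - (α : ℂ) ^ 2 - (β : ℂ) ^ 2) • (1 : Matrix (Fin 2) (Fin 2) ℂ) +
          (2 * lam) • M)) :
    ∀ lam : ℂ, (lam + α + Complex.I * β) * (lam - α + Complex.I * β) ≠ 0 →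
      (-lam + α + Complex.I * β) * (-lam - α + Complex.I * β) ≠ 0 →
      K lam * K (-lam) = 1 := by
  intro lam h1 h2
  have hΩ : ((Ω₁ : ℂ)) ^ 2 = (β : ℂ) ^ 2 - u * conj u := by
    have hr : (Ω₁ : ℝ) ^ 2 = β ^ 2 - Complex.normSq u := by
      rw [hΩ₁, Real.sq_sqrt h]
    have h2' : ((Ω₁ : ℂ)) ^ 2 = ((β ^ 2 - Complex.normSq u : ℝ) : ℂ) := by
      exact_mod_cast congrArg (fun x : ℝ => (x : ℂ)) hr
    rw [h2']
    push_cast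
    rw [show ((Complex.normSq u : ℝ) : ℂ) = u * conj u from by rw [Complex.mul_conj]]
  have hM2 : M * M = (-(β : ℂ) ^ 2) • (1 : Matrix (Fin 2) (Fin 2) ℂ) := by
    subst hM
    ext i j
    fin_cases i <;> fin_cases j <;>
      simp [Matrix.mul_apply, Fin.sum_univ_succ, Matrix.one_apply] <;>
      first
      | linear_combination Complex.I ^ 2 * hΩ + ((β:ℂ)) ^ 2 * Complex.I_sq
      | linear_combination -(Complex.I ^ 2 * hΩ) - ((β:ℂ)) ^ 2 * Complex.I_sq
      | ring
  have expand : ((lam ^ 2 - (α : ℂ) ^ 2 - (β : ℂ) ^ 2) • (1 : Matrix (Fin 2) (Fin 2) ℂ) +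
        (2 * lam) • M) *
      (((-lam) ^ 2 - (α : ℂ) ^ 2 - (β : ℂ) ^ 2) • (1 : Matrix (Fin 2) (Fin 2) ℂ) +
        (2 * (-lam)) • M) =
      ((lam ^ 2 - (α : ℂ) ^ 2 - (β : ℂ) ^ 2) ^ 2 + 4 * lam ^ 2 * (β : ℂ) ^ 2) •
        (1 : Matrix (Fin 2) (Fin 2) ℂ) := by
    rw [Matrix.add_mul, Matrix.mul_add, Matrix.mul_add]
    simp only [smul_mul_assoc, mul_smul_comm, smul_smul, Matrix.one_mul, Matrix.mul_one, hM2]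
    module
  rw [hK lam, hK (-lam), smul_mul_assoc, mul_smul_comm, smul_smul, expand, smul_smul]
  rw [show (((lam + α + Complex.I * β) * (lam - α + Complex.I * β))⁻¹ *
      ((-lam + α + Complex.I * β) * (-lam - α + Complex.I * β))⁻¹ *
      ((lam ^ 2 - (α : ℂ) ^ 2 - (β : ℂ) ^ 2) ^ 2 + 4 * lam ^ 2 * (β : ℂ) ^ 2)) = 1 from by
    rw [← mul_inv, inv_mul_eq_one₀ (mul_ne_zero h1 h2)]
    linear_combination (-(β:ℂ) ^ 2 * (2 * lam ^ 2 + 2 * (α:ℂ) ^ 2 + (β:ℂ) ^ 2 -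
      Complex.I ^ 2 * (β:ℂ) ^ 2)) * Complex.I_sq]
  exact one_smul _ _
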